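/- Let ρ ∈ [a,b]^K with 0 < a ≤ b, let w ~ Uniform(Δ_{K−1}), set e = ⟨ρ, w⟩ and ρ̄ = (1/K)∑_k ρ^k. Then for any δ > 0, P(e < ρ̄ − δ) ≤ exp(−K δ² / (4(b − a + δ)²)). -/

import Mathlib

open MeasureTheory ProbabilityTheory Finset
open Real Set

noncomputable section SimplexAux

/-- Type synonym for `ℝ` carrying the exponential(1) measure as `volume`. -/
def ExpSpace : Type := ℝ

instance : MeasurableSpace ExpSpace := inferInstanceAs (MeasurableSpace ℝ)
instance : MeasureSpace ExpSpace := ⟨ProbabilityTheory.expMeasure 1⟩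
instance : IsProbabilityMeasure (volume : Measure ExpSpace) :=
  isProbabilityMeasure_expMeasure one_pos

lemma expMeasure_eq : expMeasure 1 =
    volume.withDensity (fun x => ((gammaPDFReal 1 1 x).toNNReal : ENNReal)) := rfl

lemma gammaPDFReal_one_one (x : ℝ) :
    gammaPDFReal 1 1 x = if 0 ≤ x then rexp (-x) else 0 := by
  unfold gammaPDFReal
  simp [Real.Gamma_one, Real.rpow_natCast]

lemma expMeasure_Iic_zero : expMeasure 1 (Set.Iic 0) = 0 := by
  rw [expMeasure_eq, withDensity_apply _ measurableSet_Iic,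
    setLIntegral_congr (Iio_ae_eq_Iic (a := (0:ℝ))).symm]
  have : ∀ x ∈ Set.Iio (0:ℝ), ((gammaPDFReal 1 1 x).toNNReal : ENNReal) = 0 := by
    intro x hx
    simp [gammaPDFReal_one_one, not_le.2 (Set.mem_Iio.1 hx)]
  rw [setLIntegral_congr_fun (g := fun _ => 0) measurableSet_Iio this]
  simp

lemma ae_pos_expMeasure : ∀ᵐ x ∂(expMeasure 1), 0 < x := by
  rw [ae_iff]
  have : {x : ℝ | ¬ 0 < x} = Set.Iic 0 := by ext x; simp
  rw [this]; exact expMeasure_Iic_zero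

lemma integrable_exp_mul_expMeasure {c : ℝ} (hc : c < 1) :
    Integrable (fun x => rexp (c * x)) (expMeasure 1) := by
  rw [expMeasure_eq, integrable_withDensity_iff
    ((measurable_gammaPDFReal 1 1).real_toNNReal.coe_nnreal_ennreal)
    (Filter.Eventually.of_forall fun x => ENNReal.coe_lt_top)]
  have heq : ∀ x : ℝ, rexp (c * x) * ((gammaPDFReal 1 1 x).toNNReal : ℝ)
      = Set.indicator (Set.Ici 0) (fun x => rexp (-((1 - c) * x))) x := by
    intro x
    rw [Real.coe_toNNReal _ (gammaPDFReal_nonneg zero_lt_one one_pos x),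
      gammaPDFReal_one_one, Set.indicator_apply]
    by_cases hx : (0:ℝ) ≤ x
    · simp only [if_pos hx, Set.mem_Ici, hx, if_true, ← Real.exp_add]
      ring_nf
    · rw [if_neg hx, if_neg (by simpa using hx), mul_zero]
  simp only [ENNReal.coe_toReal, heq]
  rw [integrable_indicator_iff measurableSet_Ici]
  rw [integrableOn_Ici_iff_integrableOn_Ioi]
  have := exp_neg_integrableOn_Ioi 0 (show (0:ℝ) < 1 - c by linarith)
  simp only [neg_mul] at this ⊢
  exact this

lemma integral_exp_mul_expMeasure {c : ℝ} (hc : c < 1) :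
    ∫ x, rexp (c * x) ∂(expMeasure 1) = (1 - c)⁻¹ := by
  have hb : (0:ℝ) < 1 - c := by linarith
  rw [expMeasure_eq,
    integral_withDensity_eq_integral_smul (measurable_gammaPDFReal 1 1).real_toNNReal]
  have heq : ∀ x : ℝ, (gammaPDFReal 1 1 x).toNNReal • rexp (c * x)
      = Set.indicator (Set.Ici 0) (fun x => rexp (-((1 - c)) * x)) x := by
    intro x
    rw [NNReal.smul_def, smul_eq_mul,
      Real.coe_toNNReal _ (gammaPDFReal_nonneg zero_lt_one one_pos x),
      gammaPDFReal_one_one, Set.indicator_apply]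
    by_cases hx : (0:ℝ) ≤ x
    · simp only [if_pos hx, Set.mem_Ici, hx, if_true, ← Real.exp_add]
      ring_nf
    · simp [hx]
  simp only [heq]
  rw [integral_indicator measurableSet_Ici, integral_Ici_eq_integral_Ioi]
  have := integral_comp_mul_left_Ioi (fun x => rexp (-x)) 0 hb
  simp only [mul_zero, integral_exp_neg_Ioi, neg_zero, Real.exp_zero, smul_eq_mul, mul_one]
    at this
  simp only [neg_mul] at this ⊢
  exact this

/-- Transport a real function to `ExpSpace`. -/
def toExp (f : ℝ → ℝ) : ExpSpace → ℝ := f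

lemma inv_one_add_le_exp {x : ℝ} (hx : |x| ≤ 1/2) : (1 + x)⁻¹ ≤ rexp (x^2 - x) := by
  obtain ⟨hx1, hx2⟩ := abs_le.1 hx
  have h1 : (0:ℝ) < 1 + x := by linarith
  have key : rexp (x - x^2) ≤ 1 + x := by
    rcases le_or_gt 0 x with h | h
    · have h2 : 1 - (x - x^2) ≤ rexp (-(x - x^2)) := by
        have := Real.add_one_le_exp (-(x - x^2)); linarith
      have h3 : rexp (x - x^2) * rexp (-(x - x^2)) = 1 := by
        rw [← Real.exp_add]; simp
      nlinarith [Real.exp_pos (x - x^2)]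
    · set y := -x with hy
      have hy1 : 0 < y := by simp only [hy]; linarith
      have hy2 : y ≤ 1/2 := by simp only [hy]; linarith
      have hq : 1 + (y + y^2) + (y + y^2)^2/2 ≤ rexp (y + y^2) :=
        Real.quadratic_le_exp_of_nonneg (by positivity)
      have h4 : 1 ≤ (1 - y) * rexp (y + y^2) := by nlinarith
      have h5 : x - x^2 = -(y + y^2) := by simp only [hy]; ring
      rw [h5, Real.exp_neg]
      calc (rexp (y + y^2))⁻¹ = (rexp (y + y^2))⁻¹ * 1 := by ring
        _ ≤ (rexp (y + y^2))⁻¹ * ((1 - y) * rexp (y + y^2)) := by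
            apply mul_le_mul_of_nonneg_left h4
            positivity
        _ = 1 - y := by field_simp
        _ = 1 + x := by simp only [hy]; ring
  have := inv_anti₀ (Real.exp_pos (x - x^2)) key
  rw [← Real.exp_neg] at this
  convert this using 2
  · rfl
  ring


/-- The uniform distribution on the simplex `Δ_{K-1}` (i.e. `Dirichlet(1,…,1)`),
realised as the law of `Y / (∑ Y)` with `Y k` i.i.d. `Exponential(1)`. -/
noncomputable def simplexUniform (K : ℕ) : Measure (Fin K → ℝ) :=
  (Measure.pi fun _ : Fin K => ProbabilityTheory.expMeasure 1).map
    (fun Y k => Y k / ∑ j, Y j)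

end SimplexAux
theorem lp_coefficient_concentration (K : ℕ) (hK : 1 ≤ K)
    (a b δ : ℝ) (ha : 0 < a) (hab : a ≤ b) (hδ : 0 < δ)
    (ρ : Fin K → ℝ) (hbd : ∀ k, a ≤ ρ k ∧ ρ k ≤ b) :
    simplexUniform K {w | ∑ k, ρ k * w k < ((1 : ℝ) / K) * (∑ k, ρ k) - δ}
      ≤ ENNReal.ofReal (Real.exp (-(K * δ ^ 2) / (4 * (b - a + δ) ^ 2))) := by
  have hKpos : (0:ℝ) < K := by exact_mod_cast hK
  set ρbar : ℝ := ((1:ℝ)/K) * ∑ k, ρ k with hρbar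
  set α : Fin K → ℝ := fun k => ρ k - ρbar + δ with hα
  set c : ℝ := b - a + δ with hc
  have hcpos : 0 < c := by rw [hc]; linarith
  set s : ℝ := δ / (2 * c^2) with hs
  clear_value ρbar α c s
  have hspos : 0 < s := by rw [hs]; positivity
  -- bounds on ρbar
  have hsum_lb : (K:ℝ) * a ≤ ∑ k, ρ k := by
    calc (K:ℝ) * a = ∑ _k : Fin K, a := by
          rw [Finset.sum_const, Finset.card_univ, Fintype.card_fin, nsmul_eq_mul]
      _ ≤ ∑ k, ρ k := Finset.sum_le_sum fun k _ => (hbd k).1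
  have hsum_ub : ∑ k, ρ k ≤ (K:ℝ) * b := by
    calc ∑ k, ρ k ≤ ∑ _k : Fin K, b := Finset.sum_le_sum fun k _ => (hbd k).2
      _ = (K:ℝ) * b := by
          rw [Finset.sum_const, Finset.card_univ, Fintype.card_fin, nsmul_eq_mul]
  have hρbar_lb : a ≤ ρbar := by
    rw [hρbar]
    rw [div_mul_eq_mul_div, one_mul, le_div_iff₀ hKpos, mul_comm]
    exact hsum_lb
  have hρbar_ub : ρbar ≤ b := by
    rw [hρbar, div_mul_eq_mul_div, one_mul, div_le_iff₀ hKpos, mul_comm]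
    exact hsum_ub
  have hαabs : ∀ k, |α k| ≤ c := by
    intro k
    have hαk : α k = ρ k - ρbar + δ := by rw [hα]
    rw [abs_le, hαk, hc]
    constructor
    · have := (hbd k).1; linarith
    · have := (hbd k).2; linarith
  have hsα : ∀ k, |s * α k| ≤ 1/2 := by
    intro k
    rw [abs_mul, abs_of_pos hspos]
    have hδc : δ ≤ c := by rw [hc]; linarith
    calc s * |α k| ≤ s * c := by
          exact mul_le_mul_of_nonneg_left (hαabs k) hspos.le
      _ = δ / (2 * c) := by rw [hs]; field_simp
      _ ≤ 1/2 := by rw [div_le_div_iff₀ (by linarith) (by norm_num)]; linarith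
  have hαsum : ∑ k, α k = K * δ := by
    rw [hα]
    rw [Finset.sum_add_distrib, Finset.sum_sub_distrib, Finset.sum_const,
      Finset.card_univ, Fintype.card_fin, nsmul_eq_mul, hρbar]
    field_simp
    simp
  have hα2 : ∑ k, (α k)^2 ≤ K * c^2 := by
    calc ∑ k, (α k)^2 ≤ ∑ _k : Fin K, c^2 := by
          refine Finset.sum_le_sum fun k _ => ?_
          have h1 := hαabs k
          have h2 := abs_nonneg (α k)
          nlinarith [sq_abs (α k)]
      _ = K * c^2 := by
          rw [Finset.sum_const, Finset.card_univ, Fintype.card_fin, nsmul_eq_mul]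
  -- measure setup
  set μ : Measure (Fin K → ℝ) := Measure.pi fun _ => expMeasure 1 with hμ
  haveI : IsProbabilityMeasure (expMeasure 1) := isProbabilityMeasure_expMeasure one_pos
  haveI : IsProbabilityMeasure μ := by rw [hμ]; infer_instance
  have hmeas_map : Measurable (fun (Y : Fin K → ℝ) k => Y k / ∑ j, Y j) :=
    measurable_pi_lambda _ fun k => (measurable_pi_apply k).div
      (Finset.measurable_sum _ fun j _ => measurable_pi_apply j)
  have hEmeas : MeasurableSet {w : Fin K → ℝ | ∑ k, ρ k * w k < ρbar - δ} :=
    measurableSet_lt (Finset.measurable_sum _ fun k _ =>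
      (measurable_pi_apply k).const_mul _) measurable_const
  set X : (Fin K → ℝ) → ℝ := fun Y => ∑ k, α k * Y k with hX
  have hae : ∀ᵐ Y ∂μ, ∀ k, 0 < Y k := by
    rw [ae_all_iff]
    intro k
    exact (MeasureTheory.Measure.tendsto_eval_ae_ae
      (μ := fun _ : Fin K => expMeasure 1) (i := k)).eventually ae_pos_expMeasure
  have hsub : μ ((fun Y k => Y k / ∑ j, Y j) ⁻¹'
      {w | ∑ k, ρ k * w k < ρbar - δ}) ≤ μ {Y | X Y ≤ 0} := by
    refine measure_mono_ae ?_
    filter_upwards [hae] with Y hY hYE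
    have hS : 0 < ∑ j, Y j :=
      Finset.sum_pos (fun j _ => hY j) ⟨⟨0, hK⟩, Finset.mem_univ _⟩
    have hYE' : ∑ k, ρ k * (Y k / ∑ j, Y j) < ρbar - δ := hYE
    have hdiv : ∑ k, ρ k * (Y k / ∑ j, Y j) = (∑ k, ρ k * Y k) / ∑ j, Y j := by
      rw [Finset.sum_div]
      exact Finset.sum_congr rfl fun k _ => (mul_div_assoc _ _ _).symm
    rw [hdiv, div_lt_iff₀ hS] at hYE'
    show X Y ≤ 0
    have hXeq : X Y = ∑ k, ρ k * Y k - (ρbar - δ) * ∑ j, Y j := by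
      rw [hX, hα]
      simp only [sub_mul, add_mul, Finset.sum_add_distrib, Finset.sum_sub_distrib,
        Finset.mul_sum]
      ring_nf
    rw [hXeq]
    linarith
  -- Chernoff bound
  have hexp_prod : ∀ Y : Fin K → ℝ, Real.exp (-s * X Y)
      = ∏ k, Real.exp ((-(s * α k)) * Y k) := by
    intro Y
    rw [← Real.exp_sum]
    congr 1
    rw [hX, Finset.mul_sum]
    exact Finset.sum_congr rfl fun k _ => by ring
  have hlt1 : ∀ k, -(s * α k) < 1 := by
    intro k
    obtain ⟨h1, h2⟩ := abs_le.1 (hsα k)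
    linarith
  have hμvol : (volume : Measure (Fin K → ExpSpace)) = μ := rfl
  have hcoord : ∀ k, (∫ x : ExpSpace, toExp (fun y => Real.exp ((-(s * α k)) * y)) x)
      = (1 + s * α k)⁻¹ := by
    intro k
    have h1 : (∫ x : ExpSpace, toExp (fun y => Real.exp ((-(s * α k)) * y)) x)
        = ∫ y, Real.exp ((-(s * α k)) * y) ∂(expMeasure 1) := rfl
    rw [h1, integral_exp_mul_expMeasure (hlt1 k)]
    congr 1
    ring
  have h_int : Integrable (fun Y => Real.exp (-s * X Y)) μ := by
    simp only [hexp_prod]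
    rw [← hμvol]
    haveI : ∀ _ : Fin K, SigmaFinite (volume : Measure ExpSpace) := fun _ => inferInstance
    have h0 : Integrable
        (fun x : Fin K → ExpSpace => ∏ k, toExp (fun y => Real.exp ((-(s * α k)) * y)) (x k))
        (volume : Measure (Fin K → ExpSpace)) :=
      @MeasureTheory.Integrable.fintype_prod ℝ (Fin K) _ _ ExpSpace
        (fun k => toExp (fun y => Real.exp ((-(s * α k)) * y))) _ (fun _ => volume) this
        (fun k => integrable_exp_mul_expMeasure (hlt1 k))
    exact h0
  have hmgf : mgf X μ (-s) = ∏ k, (1 + s * α k)⁻¹ := by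
    haveI : ∀ _ : Fin K, SigmaFinite (volume : Measure ExpSpace) := fun _ => inferInstance
    have h2 : (∫ x : Fin K → ExpSpace, ∏ k, toExp (fun y => Real.exp ((-(s * α k)) * y)) (x k))
        = ∏ k, ∫ x : ExpSpace, toExp (fun y => Real.exp ((-(s * α k)) * y)) x :=
      @MeasureTheory.integral_fintype_prod_eq_prod ℝ (Fin K) _ _ (fun _ => ExpSpace)
        (fun k => toExp (fun y => Real.exp ((-(s * α k)) * y))) _ (fun _ => volume) this
    calc mgf X μ (-s) = ∫ Y, Real.exp (-s * X Y) ∂μ := rfl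
      _ = ∫ Y, ∏ k, Real.exp ((-(s * α k)) * Y k) ∂μ := by simp only [hexp_prod]
      _ = ∫ x : Fin K → ExpSpace, ∏ k, toExp (fun y => Real.exp ((-(s * α k)) * y)) (x k) := by
          rw [← hμvol]; rfl
      _ = ∏ k, ∫ x : ExpSpace, toExp (fun y => Real.exp ((-(s * α k)) * y)) x := h2
      _ = ∏ k, (1 + s * α k)⁻¹ := Finset.prod_congr rfl fun k _ => hcoord k
  have hchern := measure_le_le_exp_mul_mgf (X := X) (μ := μ) (t := -s) 0
    (by linarith) h_int
  rw [hmgf] at hchern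
  simp only [neg_neg, mul_zero, Real.exp_zero, one_mul] at hchern
  -- final product bound
  have hone_add_pos : ∀ k, (0:ℝ) < 1 + s * α k := by
    intro k
    obtain ⟨h1, h2⟩ := abs_le.1 (hsα k)
    linarith
  have hprod : ∏ k, (1 + s * α k)⁻¹ ≤ Real.exp (-(K * δ^2) / (4 * c^2)) := by
    calc ∏ k, (1 + s * α k)⁻¹ ≤ ∏ k, Real.exp ((s * α k)^2 - s * α k) := by
          refine Finset.prod_le_prod (fun k _ => inv_nonneg.2 (hone_add_pos k).le)
            (fun k _ => inv_one_add_le_exp (hsα k))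
      _ = Real.exp (∑ k, ((s * α k)^2 - s * α k)) := (Real.exp_sum _ _).symm
      _ ≤ Real.exp (-(K * δ^2) / (4 * c^2)) := by
          rw [Real.exp_le_exp]
          have hsum_eq : ∑ k, ((s * α k)^2 - s * α k)
              = s^2 * (∑ k, (α k)^2) - s * (K * δ) := by
            rw [Finset.sum_sub_distrib, ← hαsum, Finset.mul_sum, Finset.mul_sum]
            congr 1
            exact Finset.sum_congr rfl fun k _ => by ring
          rw [hsum_eq]
          have e1 : s^2 * (K * c^2) = K * δ^2 / (4 * c^2) := by
            rw [hs]; field_simp; ring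
          have e2 : s * (K * δ) = K * δ^2 / (2 * c^2) := by
            rw [hs]; field_simp
          have e3 : s^2 * (∑ k, (α k)^2) ≤ s^2 * (K * c^2) :=
            mul_le_mul_of_nonneg_left hα2 (sq_nonneg s)
          have e4 : -(K * δ^2) / (4 * c^2) = K * δ^2 / (4 * c^2) - K * δ^2 / (2 * c^2) := by
            field_simp
            ring
          rw [e4, ← e1, ← e2]
          linarith
  have hfinal : (μ {Y | X Y ≤ 0}).toReal ≤ Real.exp (-(K * δ^2) / (4 * c^2)) :=
    le_trans hchern hprod
  rw [simplexUniform, Measure.map_apply hmeas_map hEmeas]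
  refine le_trans hsub ?_
  rw [ENNReal.le_ofReal_iff_toReal_le (measure_ne_top μ _) (Real.exp_pos _).le]
  exact hfinal
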